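/- Let a ≥ 2 and S, T, t ≥ 1 be integers, and write t = S·k − r with 0 ≤ r ≤ S − 1 (so k = ⌈t/S⌉). Suppose 1 ≤ k ≤ T. Let n ≥ 1 be an integer, and define A_1, ..., A_T by A_j = n·a^r·(coeff of x^{k−1} in ∏_{h≠j}(x−h))/∏_{h≠j}(j−h). Then n/a^t = ∑_{j=1}^T A_j/(a^S − j) − E where E = ∑_{j=T+1}^∞ B_j/a^{Sj} with B_j = ∑_{i=1}^T A_i·i^{j−1}, provided a^S > T so all series converge. -/

import Mathlib

open Polynomial Finset

lemma basis_eq (T i : ℕ) :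
    Lagrange.basis (Finset.Icc 1 T) (fun n : ℕ => (n : ℝ)) i =
      Polynomial.C (∏ h ∈ (Finset.Icc 1 T).erase i, ((i : ℝ) - (h : ℝ))⁻¹) *
        ∏ h ∈ (Finset.Icc 1 T).erase i, (Polynomial.X - Polynomial.C (h : ℝ)) := by
  rw [Lagrange.basis]
  simp only [Lagrange.basisDivisor]
  rw [Finset.prod_mul_distrib, map_prod]

lemma lag_coeff (T j k : ℕ) (hj1 : 1 ≤ j) (hjT : j ≤ T) (hk1 : 1 ≤ k) :
    ∑ i ∈ Finset.Icc 1 T, (i : ℝ) ^ (j - 1) *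
        ((∏ h ∈ (Finset.Icc 1 T).erase i, (Polynomial.X - Polynomial.C (h : ℝ))).coeff (k - 1)) /
        ∏ h ∈ (Finset.Icc 1 T).erase i, ((i : ℝ) - (h : ℝ)) =
      if j = k then 1 else 0 := by
  classical
  have hvs : Set.InjOn (fun n : ℕ => (n : ℝ)) (Finset.Icc 1 T) :=
    fun x _ y _ h => Nat.cast_injective h
  have hdeg : (Polynomial.X ^ (j - 1) : ℝ[X]).degree < (Finset.Icc 1 T).card := by
    rw [Polynomial.degree_X_pow, Nat.card_Icc]
    exact_mod_cast Nat.lt_of_lt_of_le (Nat.sub_lt hj1 one_pos)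
      (by omega : j ≤ T + 1 - 1)
  have h := Lagrange.eq_interpolate hvs hdeg
  have h2 := congrArg (fun p : ℝ[X] => p.coeff (k - 1)) h
  simp only [Lagrange.interpolate_apply, Polynomial.finset_sum_coeff,
    Polynomial.coeff_X_pow, Polynomial.eval_pow, Polynomial.eval_X] at h2
  have hjk : (k - 1 = j - 1) ↔ (j = k) := by omega
  rw [show ((if k - 1 = j - 1 then (1:ℝ) else 0) = if j = k then 1 else 0) by
    simp [hjk]] at h2
  rw [h2]
  apply Finset.sum_congr rfl
  intro i hi
  rw [basis_eq, ← mul_assoc, ← Polynomial.C_mul, Polynomial.coeff_C_mul,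
    Finset.prod_inv_distrib]
  rw [div_eq_mul_inv]
  ring

theorem stmt17 (a S T t k r n : ℕ)
    (ha : 2 ≤ a) (hS : 1 ≤ S) (hT : 1 ≤ T) (ht : 1 ≤ t) (hn : 1 ≤ n)
    (hkr : S * k = t + r) (hr : r ≤ S - 1) (hk1 : 1 ≤ k) (hkT : k ≤ T)
    (haS : (T : ℝ) < (a : ℝ) ^ S)
    (A : ℕ → ℝ)
    (hA : ∀ j, 1 ≤ j → j ≤ T →
      A j = (n : ℝ) * (a : ℝ) ^ r *
          ((∏ h ∈ (Finset.Icc 1 T).erase j,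
              (Polynomial.X - Polynomial.C (h : ℝ))).coeff (k - 1)) /
          ∏ h ∈ (Finset.Icc 1 T).erase j, ((j : ℝ) - (h : ℝ))) :
    Summable (fun m : ℕ =>
      (∑ i ∈ Finset.Icc 1 T, A i * (i : ℝ) ^ (T + 1 + m - 1)) /
        (a : ℝ) ^ (S * (T + 1 + m))) ∧
    (n : ℝ) / (a : ℝ) ^ t =
      (∑ j ∈ Finset.Icc 1 T, A j / ((a : ℝ) ^ S - (j : ℝ))) -
        ∑' m : ℕ,
          (∑ i ∈ Finset.Icc 1 T, A i * (i : ℝ) ^ (T + 1 + m - 1)) /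
            (a : ℝ) ^ (S * (T + 1 + m)) := by
  have ha1 : (1 : ℝ) < (a : ℝ) := by exact_mod_cast (by omega : 1 < a)
  have ha0 : (0 : ℝ) < (a : ℝ) := by positivity
  have haS0 : (0 : ℝ) < (a : ℝ) ^ S := by positivity
  have haSne : ((a : ℝ) ^ S) ≠ 0 := ne_of_gt haS0
  -- bounds for i ∈ Icc 1 T
  have hib : ∀ i ∈ Finset.Icc 1 T, (i : ℝ) < (a : ℝ) ^ S := by
    intro i hi
    have : i ≤ T := (Finset.mem_Icc.mp hi).2
    exact lt_of_le_of_lt (by exact_mod_cast this) haS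
  -- the key vanishing sums
  have hB : ∀ j, 1 ≤ j → j ≤ T →
      ∑ i ∈ Finset.Icc 1 T, A i * (i : ℝ) ^ (j - 1) =
        if j = k then (n : ℝ) * (a : ℝ) ^ r else 0 := by
    intro j hj1 hjT
    have key := lag_coeff T j k hj1 hjT hk1
    have : ∑ i ∈ Finset.Icc 1 T, A i * (i : ℝ) ^ (j - 1) =
        ((n : ℝ) * (a : ℝ) ^ r) *
          ∑ i ∈ Finset.Icc 1 T, (i : ℝ) ^ (j - 1) *
            ((∏ h ∈ (Finset.Icc 1 T).erase i,
                (Polynomial.X - Polynomial.C (h : ℝ))).coeff (k - 1)) /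
            ∏ h ∈ (Finset.Icc 1 T).erase i, ((i : ℝ) - (h : ℝ)) := by
      rw [Finset.mul_sum]
      apply Finset.sum_congr rfl
      intro i hi
      obtain ⟨hi1, hi2⟩ := Finset.mem_Icc.mp hi
      rw [hA i hi1 hi2]
      rw [div_eq_mul_inv, div_eq_mul_inv]
      ring
    rw [this, key]
    split <;> simp
  -- the geometric series setup
  set g : ℕ → ℝ := fun m =>
    ∑ i ∈ Finset.Icc 1 T, A i * (i : ℝ) ^ m / (a : ℝ) ^ (S * (m + 1)) with hg_def
  have hterm : ∀ i ∈ Finset.Icc 1 T, ∀ m : ℕ,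
      A i * (i : ℝ) ^ m / (a : ℝ) ^ (S * (m + 1)) =
        (A i / (a : ℝ) ^ S) * ((i : ℝ) / (a : ℝ) ^ S) ^ m := by
    intro i _ m
    rw [pow_mul, pow_succ, div_pow]
    ring
  have hq : ∀ i ∈ Finset.Icc 1 T, (i : ℝ) / (a : ℝ) ^ S < 1 := by
    intro i hi
    rw [div_lt_one haS0]
    exact hib i hi
  have hq0 : ∀ i : ℕ, (0 : ℝ) ≤ (i : ℝ) / (a : ℝ) ^ S := by
    intro i; positivity
  have hfs : ∀ i ∈ Finset.Icc 1 T,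
      Summable (fun m : ℕ => A i * (i : ℝ) ^ m / (a : ℝ) ^ (S * (m + 1))) := by
    intro i hi
    have : Summable (fun m : ℕ => (A i / (a : ℝ) ^ S) * ((i : ℝ) / (a : ℝ) ^ S) ^ m) :=
      (summable_geometric_of_lt_one (hq0 i) (hq i hi)).mul_left _
    exact this.congr fun m => (hterm i hi m).symm
  have hfsum : ∀ i ∈ Finset.Icc 1 T,
      ∑' m : ℕ, A i * (i : ℝ) ^ m / (a : ℝ) ^ (S * (m + 1)) =
        A i / ((a : ℝ) ^ S - (i : ℝ)) := by
    intro i hi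
    have h1 : ∑' m : ℕ, A i * (i : ℝ) ^ m / (a : ℝ) ^ (S * (m + 1)) =
        ∑' m : ℕ, (A i / (a : ℝ) ^ S) * ((i : ℝ) / (a : ℝ) ^ S) ^ m :=
      tsum_congr fun m => hterm i hi m
    rw [h1, tsum_mul_left, tsum_geometric_of_lt_one (hq0 i) (hq i hi)]
    have hne : (a : ℝ) ^ S - (i : ℝ) ≠ 0 := ne_of_gt (by linarith [hib i hi])
    have h1q : (1 : ℝ) - (i : ℝ) / (a : ℝ) ^ S = ((a : ℝ) ^ S - (i : ℝ)) / (a : ℝ) ^ S := by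
      field_simp
    rw [h1q]
    field_simp
  have hg : Summable g := by
    apply summable_sum
    intro i hi
    exact hfs i hi
  have hgt : ∑' m, g m = ∑ j ∈ Finset.Icc 1 T, A j / ((a : ℝ) ^ S - (j : ℝ)) := by
    rw [hg_def, Summable.tsum_finsetSum fun i hi => hfs i hi]
    exact Finset.sum_congr rfl fun i hi => hfsum i hi
  -- head sum
  have hgval : ∀ m : ℕ, g m =
      (∑ i ∈ Finset.Icc 1 T, A i * (i : ℝ) ^ m) / (a : ℝ) ^ (S * (m + 1)) := by
    intro m; rw [hg_def]; rw [Finset.sum_div]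
  have hhead : ∑ m ∈ Finset.range T, g m = (n : ℝ) / (a : ℝ) ^ t := by
    rw [Finset.sum_eq_single (k - 1)]
    · rw [hgval]
      have hk' : k - 1 + 1 = k := by omega
      have hBk := hB k hk1 hkT
      rw [show (∑ i ∈ Finset.Icc 1 T, A i * (i : ℝ) ^ (k - 1)) =
        (n : ℝ) * (a : ℝ) ^ r from by rw [hBk]; simp, hk', hkr, pow_add]
      have hat : ((a : ℝ) ^ t) ≠ 0 := by positivity
      have har : ((a : ℝ) ^ r) ≠ 0 := by positivity
      field_simp
    · intro m hm hne
      rw [hgval]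
      have hm1 : 1 ≤ m + 1 := by omega
      have hmT : m + 1 ≤ T := by
        have := Finset.mem_range.mp hm; omega
      have := hB (m + 1) hm1 hmT
      rw [show m + 1 - 1 = m from by omega] at this
      rw [this, if_neg (by omega)]
      simp
    · intro h
      exact absurd (Finset.mem_range.mpr (by omega)) h
  -- tail
  have htail_eq : (fun m : ℕ =>
      (∑ i ∈ Finset.Icc 1 T, A i * (i : ℝ) ^ (T + 1 + m - 1)) /
        (a : ℝ) ^ (S * (T + 1 + m))) = fun m => g (m + T) := by
    funext m
    rw [hgval]
    rw [show T + 1 + m - 1 = m + T from by omega, show T + 1 + m = m + T + 1 from by omega]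
  have hsummable : Summable (fun m : ℕ =>
      (∑ i ∈ Finset.Icc 1 T, A i * (i : ℝ) ^ (T + 1 + m - 1)) /
        (a : ℝ) ^ (S * (T + 1 + m))) := by
    rw [htail_eq]
    exact (summable_nat_add_iff T).mpr hg
  refine ⟨hsummable, ?_⟩
  have hsplit := hg.sum_add_tsum_nat_add T
  rw [hhead, hgt] at hsplit
  have : ∑' m : ℕ,
      (∑ i ∈ Finset.Icc 1 T, A i * (i : ℝ) ^ (T + 1 + m - 1)) /
        (a : ℝ) ^ (S * (T + 1 + m)) = ∑' m : ℕ, g (m + T) := by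
    rw [htail_eq]
  rw [this]
  linarith
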